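/- Let p₁ < p₂, μ ∈ (0,1], and U : (p₁,p₂] → ℂ satisfy U(p) = (p−p₁)^{μ−1} ũ(p) with ũ continuous on [p₁,p₂], differentiable on (p₁,p₂) with ũ' ∈ L¹. Let ψ ∈ C²(I) on an open interval I ⊇ [p₁,p₂] with ψ' monotone and nonvanishing on [p₁,p₂], and set m = min_{[p₁,p₂]} |ψ'| > 0. Then for all ω > 0, |∫_{p₁}^{p₂} U(p) e^{iωψ(p)} dp| ≤ C ω^{−μ} with C = (1/μ)‖ũ‖_{L^∞(p₁,p₂)} + (4‖ũ‖_{L^∞(p₁,p₂)} + ‖ũ'‖_{L¹(p₁,p₂)}) m^{−1}. -/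

import Mathlib

open Complex intervalIntegral MeasureTheory Set in
private lemma vdc_aux_mono_deriv_nonneg {f : ℝ → ℝ} {a b p d : ℝ}
    (hf : MonotoneOn f (Set.Icc a b)) (hp : p ∈ Set.Ioo a b) (hd : HasDerivAt f d p) :
    0 ≤ d := by
  have h := hasDerivAt_iff_tendsto_slope.mp hd
  have h2 : Filter.Tendsto (slope f p) (nhdsWithin p (Set.Ioi p)) (nhds d) :=
    h.mono_left (nhdsWithin_mono _ (by intro x hx; exact ne_of_gt hx))
  refine ge_of_tendsto h2 ?_
  filter_upwards [Ioo_mem_nhdsGT_of_mem ⟨le_refl p, hp.2⟩] with x hx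
  have : f p ≤ f x := hf ⟨hp.1.le, hp.2.le⟩ ⟨hp.1.le.trans hx.1.le, hx.2.le⟩ hx.1.le
  rw [slope_def_field]
  exact div_nonneg (by linarith) (by linarith [hx.1])

private lemma vdc_aux_anti_deriv_nonpos {f : ℝ → ℝ} {a b p d : ℝ}
    (hf : AntitoneOn f (Set.Icc a b)) (hp : p ∈ Set.Ioo a b) (hd : HasDerivAt f d p) :
    d ≤ 0 := by
  have h := vdc_aux_mono_deriv_nonneg (f := fun x => -f x)
    (fun x hx y hy hxy => neg_le_neg (hf hx hy hxy)) hp hd.neg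
  linarith

private lemma vdc_aux_inv_sub_inv_le {m x y : ℝ} (hm : 0 < m)
    (h : (m ≤ x ∧ m ≤ y) ∨ (x ≤ -m ∧ y ≤ -m)) : x⁻¹ - y⁻¹ ≤ m⁻¹ := by
  rcases h with ⟨hx, hy⟩ | ⟨hx, hy⟩
  · have h1 : x⁻¹ ≤ m⁻¹ := inv_anti₀ hm hx
    have h2 : 0 < y⁻¹ := inv_pos.mpr (lt_of_lt_of_le hm hy)
    linarith
  · have hx0 : x < 0 := lt_of_le_of_lt hx (by linarith)
    have hy0 : y < 0 := lt_of_le_of_lt hy (by linarith)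
    have h1 : x⁻¹ < 0 := inv_lt_zero.mpr hx0
    have h2 : (-m)⁻¹ ≤ y⁻¹ := (inv_le_inv_of_neg (by linarith) hy0).mpr hy
    have h3 : (-m)⁻¹ = -m⁻¹ := by ring
    linarith

open Complex

theorem vdc_nonstationary_singular
    (p₁ p₂ : ℝ) (hp : p₁ < p₂) (μ : ℝ) (hμ : μ ∈ Set.Ioc (0:ℝ) 1)
    (I : Set ℝ) (hIopen : IsOpen I) (hIsub : Set.Icc p₁ p₂ ⊆ I)
    (ψ : ℝ → ℝ) (hψ : ContDiffOn ℝ 2 ψ I)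
    (hmono : MonotoneOn (deriv ψ) (Set.Icc p₁ p₂) ∨
      AntitoneOn (deriv ψ) (Set.Icc p₁ p₂))
    (m : ℝ) (hm : 0 < m)
    (hmin : IsLeast ((fun p => |deriv ψ p|) '' Set.Icc p₁ p₂) m)
    (ut : ℝ → ℂ)
    (hcont : ContinuousOn ut (Set.Icc p₁ p₂))
    (hdiff : ∀ p ∈ Set.Ioo p₁ p₂, DifferentiableAt ℝ ut p)
    (hint : IntervalIntegrable (fun p => ‖deriv ut p‖) MeasureTheory.volume p₁ p₂)
    (U : ℝ → ℂ)
    (hU : ∀ p ∈ Set.Ioc p₁ p₂, U p = (((p - p₁) ^ (μ - 1) : ℝ) : ℂ) * ut p) :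
    ∀ ω : ℝ, 0 < ω →
      ‖∫ p in p₁..p₂, U p * Complex.exp (Complex.I * ω * ψ p)‖ ≤
        ((1 / μ) * (⨆ p : Set.Icc p₁ p₂, ‖ut (p : ℝ)‖) +
          (4 * (⨆ p : Set.Icc p₁ p₂, ‖ut (p : ℝ)‖) +
            ∫ p in p₁..p₂, ‖deriv ut p‖) * m⁻¹) * ω ^ (-μ) := by
  open intervalIntegral MeasureTheory Set in
    intro ω hω
    have hμ0 : 0 < μ := hμ.1
    have hμ1 : μ ≤ 1 := hμ.2
    set M := ⨆ p : Set.Icc p₁ p₂, ‖ut (p : ℝ)‖ with hMdef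
    set V := ∫ p in p₁..p₂, ‖deriv ut p‖ with hVdef
    have hMle : ∀ p ∈ Set.Icc p₁ p₂, ‖ut p‖ ≤ M := by
      intro p hp'
      obtain ⟨C, hC⟩ := isCompact_Icc.exists_bound_of_continuousOn hcont
      have hbdd : BddAbove (Set.range fun p : Set.Icc p₁ p₂ => ‖ut (p : ℝ)‖) :=
        ⟨C, by rintro y ⟨x, rfl⟩; exact hC x x.2⟩
      exact le_ciSup hbdd ⟨p, hp'⟩
    have hM0 : 0 ≤ M := le_trans (norm_nonneg _) (hMle p₁ ⟨le_refl _, hp.le⟩)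
    have hV0 : 0 ≤ V := intervalIntegral.integral_nonneg hp.le (fun x _ => norm_nonneg _)
    set φ := deriv ψ with hφdef
    have hφm : ∀ p ∈ Set.Icc p₁ p₂, m ≤ |φ p| := fun p hp' => hmin.2 ⟨p, hp', rfl⟩
    have hφne : ∀ p ∈ Set.Icc p₁ p₂, φ p ≠ 0 := by
      intro p hp' h0
      have := hφm p hp'
      rw [h0, abs_zero] at this
      linarith
    have hψd : ∀ x ∈ I, HasDerivAt ψ (φ x) x := fun x hx =>
      ((hψ.differentiableOn (by norm_num)).differentiableAt (hIopen.mem_nhds hx)).hasDerivAt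
    have hφC1 : ContDiffOn ℝ 1 φ I := hψ.deriv_of_isOpen hIopen (by norm_num)
    have hφcont : ContinuousOn φ I := hφC1.continuousOn
    have hφd : ∀ x ∈ I, HasDerivAt φ (deriv φ x) x := fun x hx =>
      ((hφC1.differentiableOn one_ne_zero).differentiableAt (hIopen.mem_nhds hx)).hasDerivAt
    have hφ'cont : ContinuousOn (deriv φ) I := hφC1.continuousOn_deriv_of_isOpen hIopen (le_refl 1)
    have hψcont : ContinuousOn ψ I := hψ.continuousOn
    have hφcc : ContinuousOn φ (Set.Icc p₁ p₂) := hφcont.mono hIsub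
    have hsign : (∀ p ∈ Set.Icc p₁ p₂, m ≤ φ p) ∨ (∀ p ∈ Set.Icc p₁ p₂, φ p ≤ -m) := by
      rcases lt_or_gt_of_ne (hφne p₁ ⟨le_refl _, hp.le⟩) with hneg | hpos
      · right
        intro x hx
        by_contra hcon
        push_neg at hcon
        have hxm : m ≤ φ x := by
          rcases abs_cases (φ x) with ⟨he, _⟩ | ⟨he, _⟩
          · linarith [hφm x hx]
          · linarith [hφm x hx]
        obtain ⟨z, hz, hz0⟩ := intermediate_value_Icc hx.1
          (hφcc.mono (Set.Icc_subset_Icc (le_refl _) hx.2)) ⟨hneg.le, by linarith⟩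
        exact hφne z (Set.Icc_subset_Icc (le_refl _) hx.2 hz) hz0
      · left
        intro x hx
        by_contra hcon
        push_neg at hcon
        have hxm : φ x ≤ -m := by
          rcases abs_cases (φ x) with ⟨he, _⟩ | ⟨he, _⟩
          · linarith [hφm x hx]
          · linarith [hφm x hx]
        obtain ⟨z, hz, hz0⟩ := intermediate_value_Icc' hx.1
          (hφcc.mono (Set.Icc_subset_Icc (le_refl _) hx.2)) ⟨by linarith, hpos.le⟩
        exact hφne z (Set.Icc_subset_Icc (le_refl _) hx.2 hz) hz0
    set E : ℝ → ℂ := fun p => Complex.exp (Complex.I * ω * ψ p) with hEdef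
    set g : ℝ → ℂ := fun p => (((p - p₁) ^ (μ - 1) : ℝ) : ℂ) * ut p with hgdef
    set f : ℝ → ℂ := fun p => g p * E p with hfdef
    have hEnorm : ∀ p, ‖E p‖ = 1 := by
      intro p
      rw [hEdef]
      simp [Complex.norm_exp]
    have hgnorm : ∀ p, ‖g p‖ = |(p - p₁) ^ (μ - 1)| * ‖ut p‖ := by
      intro p
      rw [hgdef]
      simp [norm_mul]
    have hrpow_ii : ∀ s t : ℝ, IntervalIntegrable (fun p => (p - p₁) ^ (μ - 1)) volume s t := by
      intro s t
      have h1 : IntervalIntegrable (fun x : ℝ => x ^ (μ - 1)) volume (s - p₁) (t - p₁) :=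
        intervalIntegrable_rpow' (by linarith)
      simpa using h1.comp_sub_right p₁
    have hIccI : Set.Ioc p₁ p₂ ⊆ I := fun x hx => hIsub (Set.Ioc_subset_Icc_self hx)
    have hEcont : ContinuousOn E I := by
      apply Complex.continuous_exp.comp_continuousOn
      exact continuousOn_const.mul (Complex.continuous_ofReal.comp_continuousOn hψcont)
    have hfcontOn : ContinuousOn f (Set.Ioc p₁ p₂) := by
      apply ContinuousOn.mul
      · apply ContinuousOn.mul
        · apply Complex.continuous_ofReal.comp_continuousOn
          apply ContinuousOn.rpow_const
          · exact (continuous_id.sub continuous_const).continuousOn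
          · intro x hx
            exact Or.inl (by simp; intro h; linarith [hx.1])
        · exact hcont.mono Set.Ioc_subset_Icc_self
      · exact hEcont.mono hIccI
    have hfb : ∀ p ∈ Set.Ioc p₁ p₂, ‖f p‖ ≤ M * (p - p₁) ^ (μ - 1) := by
      intro p hp'
      have h1 : (0:ℝ) < p - p₁ := by linarith [hp'.1]
      have h2 : ‖f p‖ = ‖g p‖ := by rw [hfdef]; simp only [norm_mul, hEnorm, mul_one]
      rw [h2, hgnorm, _root_.abs_of_nonneg (Real.rpow_nonneg h1.le (μ-1))]
      rw [mul_comm M _]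
      exact mul_le_mul_of_nonneg_left (hMle p (Set.Ioc_subset_Icc_self hp'))
        (Real.rpow_nonneg h1.le _)
    have hboundint : IntervalIntegrable (fun p => M * (p - p₁) ^ (μ - 1)) volume p₁ p₂ :=
      (hrpow_ii p₁ p₂).const_mul M
    have hfIoc : IntegrableOn f (Set.Ioc p₁ p₂) volume := by
      refine Integrable.mono' ((intervalIntegrable_iff_integrableOn_Ioc_of_le hp.le).mp hboundint)
        (hfcontOn.aestronglyMeasurable measurableSet_Ioc) ?_
      exact (ae_restrict_iff' measurableSet_Ioc).mpr (Filter.Eventually.of_forall hfb)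
    have hfii : ∀ s t, p₁ ≤ s → s ≤ t → t ≤ p₂ → IntervalIntegrable f volume s t := by
      intro s t hs hst ht
      exact (intervalIntegrable_iff_integrableOn_Ioc_of_le hst).mpr
        (hfIoc.mono_set (Set.Ioc_subset_Ioc hs ht))
    have hcongr : (∫ p in p₁..p₂, U p * Complex.exp (Complex.I * ω * ψ p)) = ∫ p in p₁..p₂, f p := by
      rw [intervalIntegral.integral_of_le hp.le, intervalIntegral.integral_of_le hp.le]
      refine MeasureTheory.setIntegral_congr_fun measurableSet_Ioc fun p hp' => ?_
      rw [hU p hp']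
    have hrpow_int_eq : ∀ t, p₁ ≤ t → (∫ p in p₁..t, (p - p₁) ^ (μ - 1)) = (t - p₁) ^ μ / μ := by
      intro t ht
      rw [intervalIntegral.integral_comp_sub_right (fun x => x ^ (μ - 1)) p₁]
      rw [integral_rpow (Or.inl (by linarith))]
      simp [Real.zero_rpow (ne_of_gt hμ0), sub_self]
    have part1 : ∀ t, p₁ ≤ t → t ≤ p₂ → ‖∫ p in p₁..t, f p‖ ≤ M * (t - p₁) ^ μ / μ := by
      intro t ht1 ht2
      have hb : IntervalIntegrable (fun p => M * (p - p₁) ^ (μ - 1)) volume p₁ t :=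
        (hrpow_ii p₁ t).const_mul M
      have hae : ∀ᵐ x ∂(volume.restrict (Set.uIoc p₁ t)), ‖f x‖ ≤ M * (x - p₁) ^ (μ - 1) := by
        refine (ae_restrict_iff' measurableSet_uIoc).mpr (Filter.Eventually.of_forall ?_)
        intro p hp'
        rw [Set.uIoc_of_le ht1] at hp'
        exact hfb p (Set.Ioc_subset_Ioc (le_refl _) ht2 hp')
      have h1 := intervalIntegral.norm_integral_le_of_norm_le ht1
        ((ae_restrict_iff' measurableSet_Ioc).mp (by rwa [Set.uIoc_of_le ht1] at hae)) hb
      rw [intervalIntegral.integral_const_mul, hrpow_int_eq t ht1] at h1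
      rw [mul_div_assoc]
      exact h1
    have hδμ : (ω⁻¹) ^ μ = ω ^ (-μ) := by
      rw [Real.inv_rpow hω.le, ← Real.rpow_neg hω.le]
    have hrpos : (0:ℝ) < ω ^ (-μ) := Real.rpow_pos_of_pos hω _
    have hωinv : (0:ℝ) < ω⁻¹ := inv_pos.mpr hω
    rw [hcongr]
    rcases le_or_gt p₂ (p₁ + ω⁻¹) with hcase | hcase
    · have h1 := part1 p₂ hp.le (le_refl _)
      have h2 : (p₂ - p₁) ^ μ ≤ (ω⁻¹) ^ μ := Real.rpow_le_rpow (by linarith) (by linarith) hμ0.le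
      have h3 : 0 ≤ (4 * M + V) * m⁻¹ * ω ^ (-μ) := by positivity
      calc ‖∫ p in p₁..p₂, f p‖ ≤ M * (p₂ - p₁) ^ μ / μ := h1
        _ ≤ M * (ω⁻¹) ^ μ / μ := by gcongr
        _ = 1 / μ * M * ω ^ (-μ) := by rw [hδμ]; ring
        _ ≤ (1 / μ * M + (4 * M + V) * m⁻¹) * ω ^ (-μ) := by nlinarith
    · set a := p₁ + ω⁻¹ with hadef
      have ha1 : p₁ < a := by rw [hadef]; linarith
      have ha2 : a < p₂ := hcase
      have hap : a - p₁ = ω⁻¹ := by rw [hadef]; ring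
      have hsplit : (∫ p in p₁..p₂, f p) = (∫ p in p₁..a, f p) + ∫ p in a..p₂, f p :=
        (intervalIntegral.integral_add_adjacent_intervals
          (hfii p₁ a (le_refl _) ha1.le ha2.le) (hfii a p₂ ha1.le ha2.le (le_refl _))).symm
      have hb1 : ‖∫ p in p₁..a, f p‖ ≤ 1 / μ * M * ω ^ (-μ) := by
        have h1 := part1 a ha1.le ha2.le
        rw [hap, hδμ] at h1
        calc ‖∫ p in p₁..a, f p‖ ≤ M * ω ^ (-μ) / μ := h1
          _ = 1 / μ * M * ω ^ (-μ) := by ring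
      have hb2 : ‖∫ p in a..p₂, f p‖ ≤ (4 * M + V) * m⁻¹ * ω ^ (-μ) := by
        set Cφ : ℝ → ℂ := fun p => Complex.I * ω * (φ p : ℂ) with hCφdef
        set h : ℝ → ℂ := fun p => -Complex.I * ((ω⁻¹ * (φ p)⁻¹ : ℝ) : ℂ) with hhdef
        set W : ℝ → ℂ := fun p => g p * h p * E p with hWdef
        set B : ℝ → ℂ := fun p =>
          ((((μ - 1) * (p - p₁) ^ (μ - 2) : ℝ) : ℂ) * ut p
            + (((p - p₁) ^ (μ - 1) : ℝ) : ℂ) * deriv ut p) * h p * E p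
          + g p * (-Complex.I * ((ω⁻¹ * (-(deriv φ p) / (φ p) ^ 2) : ℝ) : ℂ)) * E p with hBdef
        have hCnorm : ∀ x : ℝ, ‖Complex.I * (ω : ℂ) * (x : ℂ)‖ = ω * |x| := by
          intro x
          simp [map_mul, Complex.norm_I, Complex.norm_real, abs_of_pos hω]
        have hCφne : ∀ p ∈ Set.Icc p₁ p₂, Cφ p ≠ 0 := by
          intro p hp'
          rw [hCφdef]
          simp only
          refine norm_ne_zero_iff.mp ?_
          rw [hCnorm]
          have h2 : 0 < |φ p| := lt_of_lt_of_le hm (hφm p hp')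
          positivity
        have hIooIcc : Set.Ioo a p₂ ⊆ Set.Ioo p₁ p₂ := fun p hp' => ⟨lt_trans ha1 hp'.1, hp'.2⟩
        have hsubIcc : Set.Icc a p₂ ⊆ Set.Icc p₁ p₂ := Set.Icc_subset_Icc ha1.le (le_refl _)
        have hsubI : Set.Icc a p₂ ⊆ I := fun x hx => hIsub (hsubIcc hx)
        have hrd : ∀ p, p₁ < p →
            HasDerivAt (fun x : ℝ => (x - p₁) ^ (μ - 1)) ((μ - 1) * (p - p₁) ^ (μ - 2)) p := by
          intro p hp1
          have h0 := (Real.hasDerivAt_rpow_const (x := p - p₁) (p := μ - 1)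
            (Or.inl (ne_of_gt (by linarith)))).comp p ((hasDerivAt_id p).sub_const p₁)
          refine h0.congr_deriv ?_
          rw [mul_one, show μ - 1 - 1 = μ - 2 from by ring]
        have hW' : ∀ p ∈ Set.Ioo a p₂, HasDerivAt W (B p + f p) p := by
          intro p hp'
          have hpIcc : p ∈ Set.Icc p₁ p₂ := Set.Ioo_subset_Icc_self (hIooIcc hp')
          have hpI : p ∈ I := hIsub hpIcc
          have hp1 : p₁ < p := (hIooIcc hp').1
          have hgd : HasDerivAt g ((((μ - 1) * (p - p₁) ^ (μ - 2) : ℝ) : ℂ) * ut p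
              + (((p - p₁) ^ (μ - 1) : ℝ) : ℂ) * deriv ut p) p := by
            have h1 := ((hrd p hp1).ofReal_comp).mul ((hdiff p (hIooIcc hp')).hasDerivAt)
            exact h1
          have hhd : HasDerivAt h (-Complex.I * ((ω⁻¹ * (-(deriv φ p) / (φ p) ^ 2) : ℝ) : ℂ)) p := by
            rw [hhdef]
            exact ((((hφd p hpI).inv (hφne p hpIcc)).const_mul ω⁻¹).ofReal_comp).const_mul
              (-Complex.I)
          have hEd : HasDerivAt E (E p * (Complex.I * ω * (φ p : ℂ))) p := by
            have h1 := (((hψd p hpI).ofReal_comp).const_mul (Complex.I * (ω : ℂ))).cexp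
            exact h1
          have hprod := (hgd.mul hhd).mul hEd
          have hne := hφne p hpIcc
          have hone : h p * (Complex.I * ω * (φ p : ℂ)) = 1 := by
            rw [hhdef]
            simp only
            push_cast
            have hωne : (ω : ℂ) ≠ 0 := Complex.ofReal_ne_zero.mpr hω.ne'
            have hφcne : ((φ p : ℝ) : ℂ) ≠ 0 := Complex.ofReal_ne_zero.mpr hne
            field_simp
            linear_combination (-1 : ℂ) * Complex.I_sq
          have hkey : g p * h p * (E p * (Complex.I * ω * (φ p : ℂ))) = f p := by
            have hr : g p * h p * (E p * (Complex.I * ω * (φ p : ℂ)))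
                = h p * (Complex.I * ω * (φ p : ℂ)) * (g p * E p) := by ring
            rw [hfdef]
            simp only
            rw [hr, hone, one_mul]
          refine hprod.congr_deriv ?_
          rw [hBdef, ← hkey]
          simp only [Pi.mul_apply]
          ring
        have hrcont : ContinuousOn (fun p : ℝ => (p - p₁) ^ (μ - 1)) (Set.Icc a p₂) := by
          apply ContinuousOn.rpow_const
          · exact (continuous_id.sub continuous_const).continuousOn
          · intro x hx
            exact Or.inl (ne_of_gt (by linarith [hx.1]))
        have hgc : ContinuousOn g (Set.Icc a p₂) :=
          (Complex.continuous_ofReal.comp_continuousOn hrcont).mul (hcont.mono hsubIcc)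
        have hCφc : ContinuousOn Cφ (Set.Icc a p₂) :=
          continuousOn_const.mul (Complex.continuous_ofReal.comp_continuousOn (hφcont.mono hsubI))
        have hhc : ContinuousOn h (Set.Icc a p₂) := by
          refine continuousOn_const.mul (Complex.continuous_ofReal.comp_continuousOn ?_)
          exact continuousOn_const.mul
            ((hφcont.mono hsubI).inv₀ fun x hx => hφne x (hsubIcc hx))
        have hWc : ContinuousOn W (Set.Icc a p₂) := (hgc.mul hhc).mul (hEcont.mono hsubI)
        -- bound function
        set b : ℝ → ℝ := fun p => ((ω * m)⁻¹ * M) * ((1 - μ) * (p - p₁) ^ (μ - 2))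
          + ((ω * m)⁻¹ * (ω⁻¹) ^ (μ - 1)) * ‖deriv ut p‖
          + ((ω⁻¹) ^ (μ - 1) * M * ω⁻¹) * (|deriv φ p| / (φ p) ^ 2) with hbdef
        have hhn : ∀ p ∈ Set.Icc p₁ p₂, ‖h p‖ ≤ (ω * m)⁻¹ := by
          intro p hp'
          have hφ0 : 0 < |φ p| := lt_of_lt_of_le hm (hφm p hp')
          rw [hhdef]
          simp only [norm_mul, norm_neg, Complex.norm_I, one_mul, Complex.norm_real,
            Real.norm_eq_abs, abs_mul, abs_inv, abs_inv, _root_.abs_of_pos hω]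
          rw [mul_inv]
          refine mul_le_mul_of_nonneg_left ?_ (by positivity)
          exact inv_anti₀ hm (hφm p hp')
        have hrle : ∀ p ∈ Set.Icc a p₂, (p - p₁) ^ (μ - 1) ≤ (ω⁻¹) ^ (μ - 1) := by
          intro p hp'
          refine Real.rpow_le_rpow_of_nonpos hωinv ?_ (by linarith)
          rw [← hap]
          linarith [hp'.1]
        have hgn : ∀ p ∈ Set.Icc a p₂, ‖g p‖ ≤ (ω⁻¹) ^ (μ - 1) * M := by
          intro p hp'
          rw [hgnorm, _root_.abs_of_nonneg (Real.rpow_nonneg (by linarith [hp'.1, ha1.le]) (μ - 1))]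
          exact mul_le_mul (hrle p hp') (hMle p (hsubIcc hp')) (norm_nonneg _)
            (Real.rpow_nonneg hωinv.le _)
        have hBb : ∀ p ∈ Set.Icc a p₂, ‖B p‖ ≤ b p := by
          intro p hp'
          have hp1 : p₁ < p := lt_of_lt_of_le ha1 hp'.1
          have hpIcc : p ∈ Set.Icc p₁ p₂ := hsubIcc hp'
          have hφp := hφm p hpIcc
          rw [hBdef]
          simp only
          refine (norm_add_le _ _).trans ?_
          rw [hbdef]
          simp only
          have hterm1 : ‖((((μ - 1) * (p - p₁) ^ (μ - 2) : ℝ) : ℂ) * ut p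
              + (((p - p₁) ^ (μ - 1) : ℝ) : ℂ) * deriv ut p) * h p * E p‖ ≤
              ((ω * m)⁻¹ * M) * ((1 - μ) * (p - p₁) ^ (μ - 2))
                + ((ω * m)⁻¹ * (ω⁻¹) ^ (μ - 1)) * ‖deriv ut p‖ := by
            rw [norm_mul, norm_mul, hEnorm, mul_one]
            have hA : ‖(((μ - 1) * (p - p₁) ^ (μ - 2) : ℝ) : ℂ) * ut p
                + (((p - p₁) ^ (μ - 1) : ℝ) : ℂ) * deriv ut p‖ ≤
                (1 - μ) * (p - p₁) ^ (μ - 2) * M + (ω⁻¹) ^ (μ - 1) * ‖deriv ut p‖ := by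
              refine (norm_add_le _ _).trans (add_le_add ?_ ?_)
              · rw [norm_mul, Complex.norm_real, Real.norm_eq_abs, abs_mul,
                  _root_.abs_of_nonneg (Real.rpow_nonneg (by linarith) (μ - 2)),
                  _root_.abs_of_nonpos (by linarith : μ - 1 ≤ 0)]
                have hm2 : (p - p₁) ^ (μ - 2) * ‖ut p‖ ≤ (p - p₁) ^ (μ - 2) * M :=
                  mul_le_mul_of_nonneg_left (hMle p hpIcc) (Real.rpow_nonneg (by linarith) _)
                have hm3 := mul_le_mul_of_nonneg_left hm2 (by linarith : (0:ℝ) ≤ 1 - μ)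
                linarith [hm3]
              · rw [norm_mul, Complex.norm_real, Real.norm_eq_abs,
                  _root_.abs_of_nonneg (Real.rpow_nonneg (by linarith) (μ - 1))]
                exact mul_le_mul_of_nonneg_right (hrle p hp') (norm_nonneg _)
            calc ‖(((μ - 1) * (p - p₁) ^ (μ - 2) : ℝ) : ℂ) * ut p
                + (((p - p₁) ^ (μ - 1) : ℝ) : ℂ) * deriv ut p‖ * ‖h p‖
                ≤ ((1 - μ) * (p - p₁) ^ (μ - 2) * M + (ω⁻¹) ^ (μ - 1) * ‖deriv ut p‖) * (ω * m)⁻¹ := by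
                  refine mul_le_mul hA (hhn p hpIcc) (norm_nonneg _) ?_
                  have h1 : (0:ℝ) ≤ (1 - μ) * (p - p₁) ^ (μ - 2) * M := by
                    have := Real.rpow_nonneg (le_of_lt (by linarith : (0:ℝ) < p - p₁)) (μ - 2)
                    have h2 : (0:ℝ) ≤ 1 - μ := by linarith
                    positivity
                  have h2 : (0:ℝ) ≤ (ω⁻¹) ^ (μ - 1) * ‖deriv ut p‖ := by
                    have := Real.rpow_nonneg hωinv.le (μ - 1)
                    positivity
                  linarith
              _ = ((ω * m)⁻¹ * M) * ((1 - μ) * (p - p₁) ^ (μ - 2))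
                + ((ω * m)⁻¹ * (ω⁻¹) ^ (μ - 1)) * ‖deriv ut p‖ := by ring
          have hterm2 : ‖g p * (-Complex.I * ((ω⁻¹ * (-(deriv φ p) / (φ p) ^ 2) : ℝ) : ℂ)) * E p‖ ≤
              ((ω⁻¹) ^ (μ - 1) * M * ω⁻¹) * (|deriv φ p| / (φ p) ^ 2) := by
            simp only [norm_mul, hEnorm, mul_one, norm_neg, Complex.norm_I, one_mul,
              Complex.norm_real, Real.norm_eq_abs, abs_mul, abs_div, abs_neg,
              _root_.abs_of_pos hωinv, _root_.abs_of_nonneg (sq_nonneg (φ p))]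
            have h0 : (0:ℝ) ≤ ω⁻¹ * (|deriv φ p| / (φ p) ^ 2) := by positivity
            calc ‖g p‖ * (ω⁻¹ * (|deriv φ p| / (φ p) ^ 2))
                ≤ ((ω⁻¹) ^ (μ - 1) * M) * (ω⁻¹ * (|deriv φ p| / (φ p) ^ 2)) :=
                  mul_le_mul_of_nonneg_right (hgn p hp') h0
              _ = ((ω⁻¹) ^ (μ - 1) * M * ω⁻¹) * (|deriv φ p| / (φ p) ^ 2) := by ring
          linarith
        -- integrability of the bound
        have hrcont2 : ContinuousOn (fun p : ℝ => (p - p₁) ^ (μ - 2)) (Set.Icc a p₂) :=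
          ContinuousOn.rpow_const (continuous_id.sub continuous_const).continuousOn
            fun x hx => Or.inl (ne_of_gt (by linarith [hx.1]))
        have hcont1 : ContinuousOn (fun p : ℝ => (1 - μ) * (p - p₁) ^ (μ - 2)) (Set.Icc a p₂) :=
          continuousOn_const.mul hrcont2
        have hii1 : IntervalIntegrable (fun p : ℝ => (1 - μ) * (p - p₁) ^ (μ - 2)) volume a p₂ :=
          hcont1.intervalIntegrable_of_Icc ha2.le
        have hii2 : IntervalIntegrable (fun p => ‖deriv ut p‖) volume a p₂ := by
          apply hint.mono_set
          rw [Set.uIcc_of_le ha2.le, Set.uIcc_of_le hp.le]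
          exact hsubIcc
        have hcont3 : ContinuousOn (fun p : ℝ => |deriv φ p| / (φ p) ^ 2) (Set.Icc a p₂) := by
          apply ContinuousOn.div
          · exact (hφ'cont.mono hsubI).abs
          · exact ((hφcont.mono hsubI).pow 2)
          · intro x hx
            exact pow_ne_zero 2 (hφne x (hsubIcc hx))
        have hii3 : IntervalIntegrable (fun p : ℝ => |deriv φ p| / (φ p) ^ 2) volume a p₂ :=
          hcont3.intervalIntegrable_of_Icc ha2.le
        have hbii : IntervalIntegrable b volume a p₂ := by
          rw [hbdef]
          exact ((hii1.const_mul _).add (hii2.const_mul _)).add ((hii3.const_mul _))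
        -- integrability of B
        have hBii : IntervalIntegrable B volume a p₂ := by
          rw [intervalIntegrable_iff_integrableOn_Ioc_of_le ha2.le]
          have hmeas : AEStronglyMeasurable B (volume.restrict (Set.Ioc a p₂)) := by
            rw [hBdef]
            have hIocm : MeasurableSet (Set.Ioc a p₂) := measurableSet_Ioc
            have hIocsub : Set.Ioc a p₂ ⊆ Set.Icc a p₂ := Set.Ioc_subset_Icc_self
            have hc1 : AEStronglyMeasurable
                (fun p : ℝ => (((μ - 1) * (p - p₁) ^ (μ - 2) : ℝ) : ℂ) * ut p)
                (volume.restrict (Set.Ioc a p₂)) := by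
              refine ContinuousOn.aestronglyMeasurable ?_ hIocm
              refine ContinuousOn.mul ?_ ((hcont.mono (hIocsub.trans hsubIcc)))
              exact Complex.continuous_ofReal.comp_continuousOn
                ((continuousOn_const.mul hrcont2).mono hIocsub)
            have hc2 : AEStronglyMeasurable
                (fun p : ℝ => (((p - p₁) ^ (μ - 1) : ℝ) : ℂ) * deriv ut p)
                (volume.restrict (Set.Ioc a p₂)) := by
              refine AEStronglyMeasurable.mul ?_
                ((stronglyMeasurable_deriv ut).aestronglyMeasurable.restrict)
              exact (Complex.continuous_ofReal.comp_continuousOn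
                (hrcont.mono hIocsub)).aestronglyMeasurable hIocm
            refine AEStronglyMeasurable.add ?_ ?_
            · exact ((hc1.add hc2).mul
                ((hhc.mono hIocsub).aestronglyMeasurable hIocm)).mul
                ((hEcont.mono (hIocsub.trans hsubI)).aestronglyMeasurable hIocm)
            · refine ContinuousOn.aestronglyMeasurable ?_ hIocm
              refine ContinuousOn.mul (ContinuousOn.mul (hgc.mono hIocsub) ?_)
                (hEcont.mono (hIocsub.trans hsubI))
              refine continuousOn_const.mul (Complex.continuous_ofReal.comp_continuousOn ?_)
              refine continuousOn_const.mul (ContinuousOn.div ?_ ?_ ?_)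
              · exact ((hφ'cont.mono hsubI).mono hIocsub).neg
              · exact (((hφcont.mono hsubI).mono hIocsub).pow 2)
              · exact fun x hx => pow_ne_zero 2 (hφne x (hsubIcc (hIocsub hx)))
          refine Integrable.mono' ((intervalIntegrable_iff_integrableOn_Ioc_of_le ha2.le).mp hbii)
            hmeas ?_
          exact (ae_restrict_iff' measurableSet_Ioc).mpr
            (Filter.Eventually.of_forall fun p hp' => hBb p (Set.Ioc_subset_Icc_self hp'))
        -- FTC
        have hfiiloc : IntervalIntegrable f volume a p₂ := hfii a p₂ ha1.le ha2.le (le_refl _)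
        have hftc : (∫ p in a..p₂, (B p + f p)) = W p₂ - W a :=
          intervalIntegral.integral_eq_sub_of_hasDerivAt_of_le ha2.le hWc hW' (hBii.add hfiiloc)
        have hIf : (∫ p in a..p₂, f p) = W p₂ - W a - ∫ p in a..p₂, B p := by
          rw [← hftc, intervalIntegral.integral_add hBii hfiiloc]
          ring
        -- bound the three integrals
        have hint1 : (∫ p in a..p₂, (1 - μ) * (p - p₁) ^ (μ - 2))
            = (ω⁻¹) ^ (μ - 1) - (p₂ - p₁) ^ (μ - 1) := by
          have hder : ∀ p ∈ Set.uIcc a p₂, HasDerivAt (fun x => -((x - p₁) ^ (μ - 1)))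
              ((1 - μ) * (p - p₁) ^ (μ - 2)) p := by
            intro p hp'
            rw [Set.uIcc_of_le ha2.le] at hp'
            have h1 := (hrd p (lt_of_lt_of_le ha1 hp'.1)).neg
            refine h1.congr_deriv ?_
            ring
          rw [intervalIntegral.integral_eq_sub_of_hasDerivAt hder hii1, ← hap]
          ring
        have hI1le : (∫ p in a..p₂, (1 - μ) * (p - p₁) ^ (μ - 2)) ≤ (ω⁻¹) ^ (μ - 1) := by
          rw [hint1]
          have : (0:ℝ) ≤ (p₂ - p₁) ^ (μ - 1) := Real.rpow_nonneg (by linarith) _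
          linarith
        have hI2le : (∫ p in a..p₂, ‖deriv ut p‖) ≤ V := by
          refine intervalIntegral.integral_mono_interval ha1.le ha2.le (le_refl _) ?_ hint
          exact Filter.Eventually.of_forall fun x => norm_nonneg _
        have hI3le : (∫ p in a..p₂, |deriv φ p| / (φ p) ^ 2) ≤ m⁻¹ := by
          have hii3' : IntervalIntegrable (fun p : ℝ => deriv φ p / (φ p) ^ 2) volume a p₂ := by
            refine ContinuousOn.intervalIntegrable_of_Icc ha2.le ?_
            exact ContinuousOn.div (hφ'cont.mono hsubI) ((hφcont.mono hsubI).pow 2)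
              fun x hx => pow_ne_zero 2 (hφne x (hsubIcc hx))
          have hFTC3 : (∫ p in a..p₂, deriv φ p / (φ p) ^ 2) = (φ a)⁻¹ - (φ p₂)⁻¹ := by
            have hder : ∀ p ∈ Set.uIcc a p₂, HasDerivAt (fun x => -(φ x)⁻¹)
                (deriv φ p / (φ p) ^ 2) p := by
              intro p hp'
              rw [Set.uIcc_of_le ha2.le] at hp'
              have h1 := ((hφd p (hsubI hp')).inv (hφne p (hsubIcc hp'))).neg
              refine h1.congr_deriv ?_
              ring
            rw [intervalIntegral.integral_eq_sub_of_hasDerivAt hder hii3']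
            ring
          have hae : ∀ᵐ (x : ℝ) ∂volume, x ≠ p₂ := by
            rw [MeasureTheory.ae_iff]
            convert Real.volume_singleton (a := p₂) using 2
            ext x
            simp
          have haIcc : a ∈ Set.Icc p₁ p₂ := ⟨ha1.le, ha2.le⟩
          have hp₂Icc : p₂ ∈ Set.Icc p₁ p₂ := ⟨hp.le, le_refl _⟩
          rcases hmono with hmon | hant
          · have hcongr3 : (∫ p in a..p₂, |deriv φ p| / (φ p) ^ 2)
                = ∫ p in a..p₂, deriv φ p / (φ p) ^ 2 := by
              apply intervalIntegral.integral_congr_ae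
              filter_upwards [hae] with x hx hxm
              rw [Set.uIoc_of_le ha2.le] at hxm
              have hxo : x ∈ Set.Ioo a p₂ := ⟨hxm.1, lt_of_le_of_ne hxm.2 hx⟩
              have h0 : 0 ≤ deriv φ x :=
                vdc_aux_mono_deriv_nonneg hmon (hIooIcc hxo) (hφd x (hsubI (Set.Ioo_subset_Icc_self hxo)))
              rw [_root_.abs_of_nonneg h0]
            rw [hcongr3, hFTC3]
            refine vdc_aux_inv_sub_inv_le hm ?_
            rcases hsign with hpos | hneg
            · exact Or.inl ⟨hpos a haIcc, hpos p₂ hp₂Icc⟩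
            · exact Or.inr ⟨hneg a haIcc, hneg p₂ hp₂Icc⟩
          · have hcongr3 : (∫ p in a..p₂, |deriv φ p| / (φ p) ^ 2)
                = ∫ p in a..p₂, -(deriv φ p / (φ p) ^ 2) := by
              apply intervalIntegral.integral_congr_ae
              filter_upwards [hae] with x hx hxm
              rw [Set.uIoc_of_le ha2.le] at hxm
              have hxo : x ∈ Set.Ioo a p₂ := ⟨hxm.1, lt_of_le_of_ne hxm.2 hx⟩
              have h0 : deriv φ x ≤ 0 :=
                vdc_aux_anti_deriv_nonpos hant (hIooIcc hxo) (hφd x (hsubI (Set.Ioo_subset_Icc_self hxo)))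
              rw [_root_.abs_of_nonpos h0]
              ring
            rw [hcongr3, intervalIntegral.integral_neg, hFTC3]
            have : -((φ a)⁻¹ - (φ p₂)⁻¹) = (φ p₂)⁻¹ - (φ a)⁻¹ := by ring
            rw [this]
            refine vdc_aux_inv_sub_inv_le hm ?_
            rcases hsign with hpos | hneg
            · exact Or.inl ⟨hpos p₂ hp₂Icc, hpos a haIcc⟩
            · exact Or.inr ⟨hneg p₂ hp₂Icc, hneg a haIcc⟩
        -- norm of the B integral
        have hBnorm : ‖∫ p in a..p₂, B p‖ ≤ ∫ p in a..p₂, b p := by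
          have hae2 : ∀ᵐ x ∂(volume.restrict (Set.uIoc a p₂)), ‖B x‖ ≤ b x := by
            refine (ae_restrict_iff' measurableSet_uIoc).mpr (Filter.Eventually.of_forall ?_)
            intro x hx
            rw [Set.uIoc_of_le ha2.le] at hx
            exact hBb x (Set.Ioc_subset_Icc_self hx)
          exact intervalIntegral.norm_integral_le_of_norm_le ha2.le
            ((ae_restrict_iff' measurableSet_Ioc).mp (by rwa [Set.uIoc_of_le ha2.le] at hae2)) hbii
        -- compute ∫ b
        have hbint : (∫ p in a..p₂, b p) =
            ((ω * m)⁻¹ * M) * (∫ p in a..p₂, (1 - μ) * (p - p₁) ^ (μ - 2))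
            + ((ω * m)⁻¹ * (ω⁻¹) ^ (μ - 1)) * (∫ p in a..p₂, ‖deriv ut p‖)
            + ((ω⁻¹) ^ (μ - 1) * M * ω⁻¹) * (∫ p in a..p₂, |deriv φ p| / (φ p) ^ 2) := by
          rw [hbdef]
          rw [intervalIntegral.integral_add ((hii1.const_mul _).add (hii2.const_mul _))
            (hii3.const_mul _), intervalIntegral.integral_add (hii1.const_mul _) (hii2.const_mul _)]
          simp only [intervalIntegral.integral_const_mul]
        -- boundary terms
        have hWb : ∀ x ∈ Set.Icc a p₂, ‖W x‖ ≤ (ω⁻¹) ^ (μ - 1) * M * (ω * m)⁻¹ := by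
          intro x hx
          rw [hWdef]
          simp only [norm_mul, hEnorm, mul_one]
          refine mul_le_mul (hgn x hx) (hhn x (hsubIcc hx)) (norm_nonneg _) ?_
          have := Real.rpow_nonneg hωinv.le (μ - 1)
          positivity
        have hδ0 : (0:ℝ) ≤ (ω⁻¹) ^ (μ - 1) := Real.rpow_nonneg hωinv.le _
        have hδexp : (ω⁻¹) ^ (μ - 1) * ω⁻¹ = ω ^ (-μ) := by
          rw [Real.inv_rpow hω.le, ← Real.rpow_neg hω.le, ← Real.rpow_neg_one ω,
            ← Real.rpow_add hω]
          congr 1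
          ring
        have hc1 : (0:ℝ) ≤ (ω * m)⁻¹ * M := by positivity
        have hc2 : (0:ℝ) ≤ (ω * m)⁻¹ * (ω⁻¹) ^ (μ - 1) := by positivity
        have hc3 : (0:ℝ) ≤ (ω⁻¹) ^ (μ - 1) * M * ω⁻¹ := by positivity
        calc ‖∫ p in a..p₂, f p‖ = ‖W p₂ - W a - ∫ p in a..p₂, B p‖ := by rw [hIf]
          _ ≤ ‖W p₂‖ + ‖W a‖ + ‖∫ p in a..p₂, B p‖ := by
              refine (norm_sub_le _ _).trans ?_
              have := norm_sub_le (W p₂) (W a)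
              linarith
          _ ≤ ((ω⁻¹) ^ (μ - 1) * M * (ω * m)⁻¹) + ((ω⁻¹) ^ (μ - 1) * M * (ω * m)⁻¹)
              + (((ω * m)⁻¹ * M) * ((ω⁻¹) ^ (μ - 1))
                + ((ω * m)⁻¹ * (ω⁻¹) ^ (μ - 1)) * V
                + ((ω⁻¹) ^ (μ - 1) * M * ω⁻¹) * m⁻¹) := by
              refine add_le_add (add_le_add (hWb p₂ ⟨ha2.le, le_refl _⟩) (hWb a ⟨le_refl _, ha2.le⟩)) ?_
              refine hBnorm.trans ?_
              rw [hbint]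
              refine add_le_add (add_le_add ?_ ?_) ?_
              · exact mul_le_mul_of_nonneg_left hI1le hc1
              · exact mul_le_mul_of_nonneg_left hI2le hc2
              · exact mul_le_mul_of_nonneg_left hI3le hc3
          _ = (4 * M + V) * m⁻¹ * ω ^ (-μ) := by
              rw [← hδexp, mul_inv]
              ring
      calc ‖∫ p in p₁..p₂, f p‖ = ‖(∫ p in p₁..a, f p) + ∫ p in a..p₂, f p‖ := by rw [hsplit]
        _ ≤ ‖∫ p in p₁..a, f p‖ + ‖∫ p in a..p₂, f p‖ := norm_add_le _ _
        _ ≤ 1 / μ * M * ω ^ (-μ) + (4 * M + V) * m⁻¹ * ω ^ (-μ) := add_le_add hb1 hb2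
        _ = (1 / μ * M + (4 * M + V) * m⁻¹) * ω ^ (-μ) := by ring
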